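/- If f : ℝ^m → ℝ is a convex function that is absolutely symmetric (invariant under permutations and sign changes of coordinates), and X ↦ M(X) is an affine map from ℝ^{p×q} into the space of m×m real matrices, then the function X ↦ f(σ(M(X))), where σ(M(X)) is the vector of singular values, is convex. -/

import Mathlib

/-- Singular values of a square real matrix (unordered):
square roots of the eigenvalues of `Mᵀ * M`. -/
noncomputable def svals {m : ℕ} (M : Matrix (Fin m) (Fin m) ℝ) : Fin m → ℝ :=
  fun i => Real.sqrt ((show (M.transpose * M).IsHermitian by
    simpa [Matrix.conjTranspose_eq_transpose_of_trivial] using Matrix.isHermitian_conjTranspose_mul_self M).eigenvalues i)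

/-- Singular values arranged in decreasing order: `svDesc M 0` is the largest. -/
noncomputable def svDesc {m : ℕ} (M : Matrix (Fin m) (Fin m) ℝ) : Fin m → ℝ :=
  fun i => svals M (Tuple.sort (svals M) i.rev)

open Finset Matrix

noncomputable def Wext {m : ℕ} (w : Fin m → ℝ) : ℕ → ℝ := fun n => if h : n < m then w ⟨n, h⟩ else 0

lemma mid' {m : ℕ} (a c : ℝ) (ha : 0 ≤ a) (hc : 0 ≤ c) (P Q : Fin m → Prop)
    [DecidablePred P] [DecidablePred Q] (B : Matrix (Fin m) (Fin m) ℝ)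
    (hB : ∀ i j, 0 ≤ B i j) (hrow : ∀ i, ∑ j, B i j ≤ 1) (hcol : ∀ j, ∑ i, B i j ≤ 1)
    (k l : Fin m) (hP : (univ.filter P).card = (k : ℕ) + 1)
    (hQ : (univ.filter Q).card = (l : ℕ) + 1) :
    ∑ i, ∑ j, (if P i then a else 0) * B i j * (if Q j then c else 0)
      ≤ ∑ n : Fin m, (if n ≤ k then a else 0) * (if n ≤ l then c else 0) := by
  have lhs_eq : ∑ i, ∑ j, (if P i then a else 0) * B i j * (if Q j then c else 0)
      = a * c * ∑ i ∈ univ.filter P, ∑ j ∈ univ.filter Q, B i j := by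
    rw [mul_sum]
    rw [Finset.sum_filter]
    congr 1; ext i
    rw [mul_sum, Finset.sum_filter]
    by_cases hPi : P i
    · simp only [hPi, if_true]
      congr 1; ext j
      by_cases hQj : Q j <;> simp [hQj] <;> ring
    · simp [hPi]
  have rhs_eq : ∑ n : Fin m, (if n ≤ k then a else 0) * (if n ≤ l then c else 0)
      = a * c * ((((k ⊓ l : Fin m) : ℕ) : ℝ) + 1) := by
    have : ∀ n : Fin m, (if n ≤ k then a else 0) * (if n ≤ l then c else 0)
        = if n ∈ Finset.Iic (k ⊓ l) then a * c else 0 := by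
      intro n
      by_cases h1 : n ≤ k <;> by_cases h2 : n ≤ l <;>
        simp [h1, h2, Finset.mem_Iic, le_inf_iff, *]
    rw [Finset.sum_congr rfl (fun n _ => this n), Finset.sum_ite_mem,
      Finset.univ_inter, Finset.sum_const, Fin.card_Iic]
    rw [nsmul_eq_mul]
    push_cast
    ring
  rw [lhs_eq, rhs_eq]
  apply mul_le_mul_of_nonneg_left _ (by positivity)
  -- ∑∑ B ≤ min k l + 1
  have b1 : ∑ i ∈ univ.filter P, ∑ j ∈ univ.filter Q, B i j ≤ ((k : ℕ) : ℝ) + 1 := by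
    calc ∑ i ∈ univ.filter P, ∑ j ∈ univ.filter Q, B i j
        ≤ ∑ i ∈ univ.filter P, (1 : ℝ) := by
          apply Finset.sum_le_sum
          intro i _
          calc ∑ j ∈ univ.filter Q, B i j ≤ ∑ j, B i j :=
                Finset.sum_le_sum_of_subset_of_nonneg (Finset.filter_subset _ _)
                  (fun j _ _ => hB i j)
            _ ≤ 1 := hrow i
      _ = ((univ.filter P).card : ℝ) := by rw [Finset.sum_const, nsmul_eq_mul, mul_one]
      _ = ((k : ℕ) : ℝ) + 1 := by rw [hP]; push_cast; ring
  have b2 : ∑ i ∈ univ.filter P, ∑ j ∈ univ.filter Q, B i j ≤ ((l : ℕ) : ℝ) + 1 := by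
    rw [show (∑ i ∈ univ.filter P, ∑ j ∈ univ.filter Q, B i j) = ∑ j ∈ univ.filter Q, ∑ i ∈ univ.filter P, B i j from Finset.sum_comm]
    calc ∑ j ∈ univ.filter Q, ∑ i ∈ univ.filter P, B i j
        ≤ ∑ j ∈ univ.filter Q, (1 : ℝ) := by
          apply Finset.sum_le_sum
          intro j _
          calc ∑ i ∈ univ.filter P, B i j ≤ ∑ i, B i j :=
                Finset.sum_le_sum_of_subset_of_nonneg (Finset.filter_subset _ _)
                  (fun i _ _ => hB i j)
            _ ≤ 1 := hcol j
      _ = ((univ.filter Q).card : ℝ) := by rw [Finset.sum_const, nsmul_eq_mul, mul_one]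
      _ = ((l : ℕ) : ℝ) + 1 := by rw [hQ]; push_cast; ring
  rcases le_total k l with h | h
  · rw [inf_eq_left.mpr h]; exact b1
  · rw [inf_eq_right.mpr h]; exact b2



lemma tele (W : ℕ → ℝ) (R : ℕ) : ∀ N, ∑ n ∈ Finset.range N, (if R ≤ n then W n - W (n+1) else 0)
    = if R < N then W R - W N else 0 := by
  intro N
  induction N with
  | zero => simp
  | succ N ih =>
    rw [Finset.sum_range_succ, ih]
    rcases lt_trichotomy R N with h | h | h
    · have h1 : R < N + 1 := by omega
      simp only [h, if_pos, h.le, if_pos h1]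
      ring
    · subst h
      simp [lt_irrefl, Nat.lt_succ_self]
    · have h1 : ¬ R < N := by omega
      have h2 : ¬ R ≤ N := by omega
      have h3 : ¬ R < N + 1 := by omega
      simp [h1, h2, h3]

lemma tele_fin {m : ℕ} (w : Fin m → ℝ) (r : Fin m) :
    ∑ k : Fin m, (if r ≤ k then Wext w k - Wext w ((k:ℕ)+1) else 0) = w r := by
  simp only [Fin.le_def]
  rw [Fin.sum_univ_eq_sum_range (fun n => if (r:ℕ) ≤ n then Wext w n - Wext w (n+1) else 0)]
  rw [tele, if_pos r.isLt]
  simp [Wext, r.isLt, Nat.lt_irrefl]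

lemma card_filter_perm_le {m : ℕ} (τ : Equiv.Perm (Fin m)) (k : Fin m) :
    (univ.filter (fun i => τ.symm i ≤ k)).card = (k : ℕ) + 1 := by
  have h : univ.filter (fun i => τ.symm i ≤ k) = (Finset.Iic k).map τ.toEmbedding := by
    ext i
    simp only [Finset.mem_filter, Finset.mem_univ, true_and, Finset.mem_map, Finset.mem_Iic,
      Equiv.coe_toEmbedding]
    constructor
    · intro h; exact ⟨τ.symm i, h, by simp⟩
    · rintro ⟨a, ha, rfl⟩; simpa using ha
  rw [h, Finset.card_map, Fin.card_Iic]

lemma E1 {m : ℕ} (x y : Fin m → ℝ) (B : Matrix (Fin m) (Fin m) ℝ)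
    (hx : ∀ i, 0 ≤ x i) (hy : ∀ j, 0 ≤ y j) (hB : ∀ i j, 0 ≤ B i j)
    (hrow : ∀ i, ∑ j, B i j ≤ 1) (hcol : ∀ j, ∑ i, B i j ≤ 1)
    (τ ρ : Equiv.Perm (Fin m)) (hτ : Antitone (x ∘ τ)) (hρ : Antitone (y ∘ ρ))
    (hmid : ∀ (a c : ℝ), 0 ≤ a → 0 ≤ c → ∀ (P Q : Fin m → Prop) (_ : DecidablePred P)
      (_ : DecidablePred Q) (k l : Fin m), (univ.filter P).card = (k : ℕ) + 1 →
      (univ.filter Q).card = (l : ℕ) + 1 →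
      ∑ i, ∑ j, (if P i then a else 0) * B i j * (if Q j then c else 0)
        ≤ ∑ n : Fin m, (if n ≤ k then a else 0) * (if n ≤ l then c else 0)) :
    ∑ i, ∑ j, x i * B i j * y j ≤ ∑ n, x (τ n) * y (ρ n) := by
  classical
  set w : Fin m → ℝ := x ∘ τ with hw
  set z : Fin m → ℝ := y ∘ ρ with hz
  set δ : Fin m → ℝ := fun k => Wext w (k:ℕ) - Wext w ((k:ℕ)+1) with hδdef
  set γ : Fin m → ℝ := fun l => Wext z (l:ℕ) - Wext z ((l:ℕ)+1) with hγdef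
  have hδ : ∀ k, 0 ≤ δ k := by
    intro k
    have h1 : Wext w (k:ℕ) = w k := by simp [Wext, k.isLt]
    by_cases h : (k:ℕ)+1 < m
    · have h2 : Wext w ((k:ℕ)+1) = w ⟨(k:ℕ)+1, h⟩ := dif_pos h
      have h3 : k ≤ (⟨(k:ℕ)+1, h⟩ : Fin m) := by simp [Fin.le_def]
      have := hτ h3
      simp only [hδdef, h1, h2]
      linarith [this]
    · have h2 : Wext w ((k:ℕ)+1) = 0 := dif_neg h
      simp only [hδdef, h1, h2]
      simpa [hw] using hx (τ k)
  have hγ : ∀ l, 0 ≤ γ l := by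
    intro l
    have h1 : Wext z (l:ℕ) = z l := by simp [Wext, l.isLt]
    by_cases h : (l:ℕ)+1 < m
    · have h2 : Wext z ((l:ℕ)+1) = z ⟨(l:ℕ)+1, h⟩ := dif_pos h
      have h3 : l ≤ (⟨(l:ℕ)+1, h⟩ : Fin m) := by simp [Fin.le_def]
      have := hρ h3
      simp only [hγdef, h1, h2]
      linarith [this]
    · have h2 : Wext z ((l:ℕ)+1) = 0 := dif_neg h
      simp only [hγdef, h1, h2]
      simpa [hz] using hy (ρ l)
  have hx' : ∀ i, x i = ∑ k, (if τ.symm i ≤ k then δ k else 0) := by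
    intro i
    have h := tele_fin w (τ.symm i)
    simp only [hw, Function.comp_apply, Equiv.apply_symm_apply] at h
    exact h.symm
  have hy' : ∀ j, y j = ∑ l, (if ρ.symm j ≤ l then γ l else 0) := by
    intro j
    have h := tele_fin z (ρ.symm j)
    simp only [hz, Function.comp_apply, Equiv.apply_symm_apply] at h
    exact h.symm
  have htw : ∀ n, (∑ k, (if n ≤ k then δ k else 0)) = w n := fun n => tele_fin w n
  have htz : ∀ n, (∑ l, (if n ≤ l then γ l else 0)) = z n := fun n => tele_fin z n
  calc ∑ i, ∑ j, x i * B i j * y j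
      = ∑ i, ∑ j, ∑ k, ∑ l,
          (if τ.symm i ≤ k then δ k else 0) * B i j * (if ρ.symm j ≤ l then γ l else 0) := by
        refine Finset.sum_congr rfl fun i _ => Finset.sum_congr rfl fun j _ => ?_
        rw [hx' i, hy' j]
        simp only [Finset.sum_mul, Finset.mul_sum]
        exact Finset.sum_comm
    _ = ∑ i, ∑ k, ∑ j, ∑ l,
          (if τ.symm i ≤ k then δ k else 0) * B i j * (if ρ.symm j ≤ l then γ l else 0) :=
        Finset.sum_congr rfl fun i _ => Finset.sum_comm
    _ = ∑ k, ∑ i, ∑ j, ∑ l,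
          (if τ.symm i ≤ k then δ k else 0) * B i j * (if ρ.symm j ≤ l then γ l else 0) :=
        Finset.sum_comm
    _ = ∑ k, ∑ i, ∑ l, ∑ j,
          (if τ.symm i ≤ k then δ k else 0) * B i j * (if ρ.symm j ≤ l then γ l else 0) :=
        Finset.sum_congr rfl fun k _ => Finset.sum_congr rfl fun i _ => Finset.sum_comm
    _ = ∑ k, ∑ l, ∑ i, ∑ j,
          (if τ.symm i ≤ k then δ k else 0) * B i j * (if ρ.symm j ≤ l then γ l else 0) :=
        Finset.sum_congr rfl fun k _ => Finset.sum_comm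
    _ ≤ ∑ k, ∑ l, ∑ n : Fin m, (if n ≤ k then δ k else 0) * (if n ≤ l then γ l else 0) :=
        Finset.sum_le_sum fun k _ => Finset.sum_le_sum fun l _ =>
          hmid (δ k) (γ l) (hδ k) (hγ l) _ _ inferInstance inferInstance k l
            (card_filter_perm_le τ k) (card_filter_perm_le ρ l)
    _ = ∑ k, ∑ n : Fin m, ∑ l, (if n ≤ k then δ k else 0) * (if n ≤ l then γ l else 0) :=
        Finset.sum_congr rfl fun k _ => Finset.sum_comm
    _ = ∑ n : Fin m, ∑ k, ∑ l, (if n ≤ k then δ k else 0) * (if n ≤ l then γ l else 0) :=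
        Finset.sum_comm
    _ = ∑ n : Fin m, (∑ k, (if n ≤ k then δ k else 0)) * (∑ l, (if n ≤ l then γ l else 0)) := by
        refine Finset.sum_congr rfl fun n _ => ?_
        rw [Finset.sum_mul]
        exact Finset.sum_congr rfl fun k _ => (Finset.mul_sum _ _ _).symm
    _ = ∑ n, w n * z n := Finset.sum_congr rfl fun n _ => by rw [htw n, htz n]
    _ = ∑ n, x (τ n) * y (ρ n) := rfl



section SVD
variable {m : ℕ} (A : Matrix (Fin m) (Fin m) ℝ)

lemma svals_nonneg (i : Fin m) : 0 ≤ svals A i := Real.sqrt_nonneg _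

lemma sq_svals (i : Fin m) :
    svals A i ^ 2 = (show (A.transpose * A).IsHermitian by simpa [Matrix.conjTranspose_eq_transpose_of_trivial] using Matrix.isHermitian_conjTranspose_mul_self A).eigenvalues i :=
  Real.sq_sqrt (Matrix.eigenvalues_conjTranspose_mul_self_nonneg A i)

lemma dot_aux (a b : Fin m → ℝ) :
    (A *ᵥ a) ⬝ᵥ (A *ᵥ b) = a ⬝ᵥ ((Aᴴ * A) *ᵥ b) := by
  rw [← Matrix.mulVec_mulVec, Matrix.dotProduct_mulVec a]
  congr 1
  rw [show (Aᴴ : Matrix (Fin m) (Fin m) ℝ) = Aᵀ from Matrix.conjTranspose_eq_transpose_of_trivial A,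
    Matrix.vecMul_transpose]

lemma exists_svd : ∃ U V : Matrix (Fin m) (Fin m) ℝ,
    Uᵀ * U = 1 ∧ U * Uᵀ = 1 ∧ Vᵀ * V = 1 ∧ V * Vᵀ = 1 ∧
    Uᵀ * A * V = Matrix.diagonal (svals A) := by
  classical
  set hA := (show (A.transpose * A).IsHermitian by simpa [Matrix.conjTranspose_eq_transpose_of_trivial] using Matrix.isHermitian_conjTranspose_mul_self A) with hAdef
  set s : Fin m → ℝ := svals A with hsdef
  set v : Fin m → EuclideanSpace ℝ (Fin m) := fun j => hA.eigenvectorBasis j with hvdef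
  have hvon : ∀ i j : Fin m, (⇑(v i) : Fin m → ℝ) ⬝ᵥ ⇑(v j) = if i = j then 1 else 0 := by
    intro i j
    have := hA.eigenvectorBasis.orthonormal
    rw [orthonormal_iff_ite] at this
    have h := this i j
    simpa [PiLp.inner_apply, dotProduct, mul_comm] using h
  have hAv : ∀ j, (A *ᵥ ⇑(v j)) ⬝ᵥ (A *ᵥ ⇑(v j)) = hA.eigenvalues j := by
    intro j
    rw [dot_aux, Matrix.conjTranspose_eq_transpose_of_trivial, hA.mulVec_eigenvectorBasis]
    simp only [dotProduct_smul]
    rw [show ((⇑(v j) : Fin m → ℝ) ⬝ᵥ ⇑(v j)) = 1 by simpa using hvon j j]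
    simp
  have hAvv : ∀ i j, i ≠ j → (A *ᵥ ⇑(v i)) ⬝ᵥ (A *ᵥ ⇑(v j)) = 0 := by
    intro i j hij
    rw [dot_aux, Matrix.conjTranspose_eq_transpose_of_trivial, hA.mulVec_eigenvectorBasis]
    simp only [dotProduct_smul]
    rw [show ((⇑(v i) : Fin m → ℝ) ⬝ᵥ ⇑(v j)) = 0 by simpa [hij] using hvon i j]
    simp
  have hAv0 : ∀ j, s j = 0 → A *ᵥ ⇑(v j) = 0 := by
    intro j hj
    have h1 : hA.eigenvalues j = 0 := by
      have := sq_svals A j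
      rw [← hsdef] at this
      rw [← this, hj]; ring
    have := hAv j
    rw [h1] at this
    exact dotProduct_self_eq_zero.mp this
  -- the candidate left singular vectors
  set u : Fin m → EuclideanSpace ℝ (Fin m) :=
    fun j => (s j)⁻¹ • (show EuclideanSpace ℝ (Fin m) from WithLp.toLp 2 (A *ᵥ ⇑(v j))) with hudef
  have hON : Orthonormal ℝ (Set.restrict {j | s j ≠ 0} u) := by
    rw [orthonormal_iff_ite]
    rintro ⟨i, hi⟩ ⟨j, hj⟩
    show inner ℝ (u i) (u j) = _
    have : (inner ℝ (u i) (u j) : ℝ) = (s i)⁻¹ * (s j)⁻¹ * ((A *ᵥ ⇑(v i)) ⬝ᵥ (A *ᵥ ⇑(v j))) := by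
      simp [hudef, PiLp.inner_apply, dotProduct, Finset.mul_sum]
      exact Finset.sum_congr rfl fun k _ => by ring
    by_cases hij : i = j
    · subst hij
      rw [this, hAv i]
      have h2 : s i ^ 2 = hA.eigenvalues i := sq_svals A i
      rw [if_pos (Subtype.ext rfl)]
      have hi' : s i ≠ 0 := hi
      rw [← h2]
      field_simp
    · have : (inner ℝ (u i) (u j) : ℝ) = 0 := by rw [this, hAvv i j hij]; ring
      rw [this, if_neg (by simpa [Subtype.ext_iff] using hij)]
  obtain ⟨b, hb⟩ := hON.exists_orthonormalBasis_extension_of_card_eq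
    (by simp [finrank_euclideanSpace])
  have hbon : ∀ i j : Fin m, ∑ k, b i k * b j k = if i = j then 1 else 0 := by
    intro i j
    have hob := b.orthonormal
    rw [orthonormal_iff_ite] at hob
    have h := hob i j
    simpa [PiLp.inner_apply, mul_comm] using h
  have hvon' : ∀ i j : Fin m, ∑ k, v i k * v j k = if i = j then 1 else 0 := by
    intro i j
    simpa [dotProduct] using hvon i j
  have hU : (Matrix.of fun i j => b j i)ᵀ * (Matrix.of fun i j => b j i) = 1 := by
    ext i j
    simp only [Matrix.mul_apply, Matrix.transpose_apply, Matrix.of_apply, Matrix.one_apply]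
    exact hbon i j
  have hV : (Matrix.of fun i j => v j i)ᵀ * (Matrix.of fun i j => v j i) = 1 := by
    ext i j
    simp only [Matrix.mul_apply, Matrix.transpose_apply, Matrix.of_apply, Matrix.one_apply]
    exact hvon' i j
  refine ⟨Matrix.of fun i j => b j i, Matrix.of fun i j => v j i, hU,
    mul_eq_one_comm.mp hU, hV, mul_eq_one_comm.mp hV, ?_⟩
  ext i j
  have hentry : ((Matrix.of fun i j => b j i)ᵀ * A * (Matrix.of fun i j => v j i)) i j
      = ∑ l, b i l * (A *ᵥ ⇑(v j)) l := by
    rw [Matrix.mul_assoc, Matrix.mul_apply]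
    simp only [Matrix.transpose_apply, Matrix.of_apply, Matrix.mul_apply, Matrix.mulVec,
      dotProduct]
  rw [hentry, Matrix.diagonal_apply]
  by_cases hj : s j = 0
  · rw [hAv0 j hj]
    simp only [Pi.zero_apply, mul_zero, Finset.sum_const_zero]
    by_cases hij : i = j
    · subst hij; rw [if_pos rfl, hj]
    · rw [if_neg hij]
  · have hbj : b j = u j := hb j hj
    have hAvj : ∀ l, (A *ᵥ ⇑(v j)) l = s j * (b j l) := by
      intro l
      rw [hbj]
      simp only [hudef, PiLp.smul_apply, smul_eq_mul]
      field_simp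
    calc ∑ l, b i l * (A *ᵥ ⇑(v j)) l = s j * ∑ l, b i l * b j l := by
          rw [Finset.mul_sum]
          exact Finset.sum_congr rfl fun l _ => by rw [hAvj l]; ring
      _ = if i = j then s i else 0 := by
          rw [hbon i j]
          by_cases hij : i = j
          · rw [hij]; simp
          · simp [hij]
end SVD


def Gset {m : ℕ} (s : Fin m → ℝ) : Set (Fin m → ℝ) :=
  {y | ∃ (e : Equiv.Perm (Fin m)) (ε : Fin m → ℝ),
    (∀ i, ε i = 1 ∨ ε i = -1) ∧ y = fun i => ε i * s (e i)}

lemma Gset_finite {m : ℕ} (s : Fin m → ℝ) : (Gset s).Finite := by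
  have h : Gset s ⊆ (fun p : Equiv.Perm (Fin m) × (Fin m → ℝ) => fun i => p.2 i * s (p.1 i)) ''
      (Set.univ ×ˢ (Set.univ.pi fun _ : Fin m => ({1, -1} : Set ℝ))) := by
    rintro y ⟨e, ε, hε, rfl⟩
    exact ⟨(e, ε), ⟨Set.mem_univ _, fun i _ => by rcases hε i with h | h <;> simp [h]⟩, rfl⟩
  refine Set.Finite.subset (Set.Finite.image _ ?_) h
  exact Set.finite_univ.prod (Set.Finite.pi fun _ => (Set.finite_singleton (-1:ℝ)).insert 1)

lemma exists_antitone_perm {m : ℕ} (x : Fin m → ℝ) :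
    ∃ τ : Equiv.Perm (Fin m), Antitone (x ∘ τ) := by
  refine ⟨(Fin.revPerm).trans (Tuple.sort x), ?_⟩
  intro a b hab
  exact Tuple.monotone_sort x (by simpa [Fin.rev_le_rev] using hab)

lemma memD {m : ℕ} (s : Fin m → ℝ) (hs : ∀ i, 0 ≤ s i) (C : Matrix (Fin m) (Fin m) ℝ)
    (hrow : ∀ i, ∑ j, |C i j| ≤ 1) (hcol : ∀ j, ∑ i, |C i j| ≤ 1)
    (hE1 : ∀ (x y : Fin m → ℝ) (B : Matrix (Fin m) (Fin m) ℝ),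
      (∀ i, 0 ≤ x i) → (∀ j, 0 ≤ y j) → (∀ i j, 0 ≤ B i j) →
      (∀ i, ∑ j, B i j ≤ 1) → (∀ j, ∑ i, B i j ≤ 1) →
      ∀ (τ ρ : Equiv.Perm (Fin m)), Antitone (x ∘ τ) → Antitone (y ∘ ρ) →
      ∑ i, ∑ j, x i * B i j * y j ≤ ∑ n, x (τ n) * y (ρ n)) :
    (fun i => ∑ j, C i j * s j) ∈ convexHull ℝ (Gset s) := by
  classical
  by_contra hmem
  obtain ⟨φ, t, hlt, htx⟩ := geometric_hahn_banach_closed_point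
    (convex_convexHull ℝ (Gset s)) ((Gset_finite s).isClosed_convexHull ℝ) hmem
  set vv : Fin m → ℝ := fun i => φ (fun j => if i = j then 1 else 0) with hvv
  have hφ : ∀ xx : Fin m → ℝ, φ xx = ∑ i, xx i * vv i := by
    intro xx
    conv_lhs => rw [pi_eq_sum_univ xx]
    rw [map_sum]
    refine Finset.sum_congr rfl fun i _ => ?_
    rw [φ.map_smul]
    rfl
  obtain ⟨τ, hτ⟩ := exists_antitone_perm (fun i => |vv i|)
  obtain ⟨ρ, hρ⟩ := exists_antitone_perm s
  have step1 : φ (fun i => ∑ j, C i j * s j) ≤ ∑ i, ∑ j, |vv i| * |C i j| * s j := by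
    rw [hφ]
    apply Finset.sum_le_sum
    intro i _
    calc (∑ j, C i j * s j) * vv i ≤ |(∑ j, C i j * s j) * vv i| := le_abs_self _
      _ = |∑ j, C i j * s j| * |vv i| := abs_mul _ _
      _ ≤ (∑ j, |C i j| * s j) * |vv i| := by
          apply mul_le_mul_of_nonneg_right _ (abs_nonneg _)
          calc |∑ j, C i j * s j| ≤ ∑ j, |C i j * s j| := Finset.abs_sum_le_sum_abs _ _
            _ = ∑ j, |C i j| * s j := Finset.sum_congr rfl fun j _ => by
                rw [abs_mul, abs_of_nonneg (hs j)]
      _ = ∑ j, |vv i| * |C i j| * s j := by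
          rw [Finset.sum_mul]
          refine Finset.sum_congr rfl fun j _ => ?_
          ring
  have step2 : ∑ i, ∑ j, |vv i| * |C i j| * s j ≤ ∑ n, |vv (τ n)| * s (ρ n) :=
    hE1 (fun i => |vv i|) s (Matrix.of fun i j => |C i j|) (fun i => abs_nonneg _) hs
      (fun i j => abs_nonneg _) hrow hcol τ ρ hτ hρ
  set ε : Fin m → ℝ := fun i => if vv i < 0 then -1 else 1 with hε
  set e : Equiv.Perm (Fin m) := τ.symm.trans ρ with he
  have hy₀ : (fun i => ε i * s (e i)) ∈ Gset s :=
    ⟨e, ε, fun i => by by_cases h : vv i < 0 <;> simp [hε, h], rfl⟩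
  have hφy₀ : φ (fun i => ε i * s (e i)) = ∑ n, |vv (τ n)| * s (ρ n) := by
    rw [hφ]
    rw [← Equiv.sum_comp τ (fun i => (ε i * s (e i)) * vv i)]
    apply Finset.sum_congr rfl
    intro n _
    have h1 : e (τ n) = ρ n := by simp [he]
    have h2 : ε (τ n) * vv (τ n) = |vv (τ n)| := by
      by_cases h : vv (τ n) < 0
      · simp [hε, h, abs_of_neg h]
      · simp [hε, h, abs_of_nonneg (le_of_not_gt h)]
    rw [h1]
    calc ε (τ n) * s (ρ n) * vv (τ n) = (ε (τ n) * vv (τ n)) * s (ρ n) := by ring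
      _ = |vv (τ n)| * s (ρ n) := by rw [h2]
  have := hlt _ (subset_convexHull ℝ (Gset s) hy₀)
  rw [hφy₀] at this
  linarith [step1.trans step2]


lemma E1' {m : ℕ} (x y : Fin m → ℝ) (B : Matrix (Fin m) (Fin m) ℝ)
    (hx : ∀ i, 0 ≤ x i) (hy : ∀ j, 0 ≤ y j) (hB : ∀ i j, 0 ≤ B i j)
    (hrow : ∀ i, ∑ j, B i j ≤ 1) (hcol : ∀ j, ∑ i, B i j ≤ 1)
    (τ ρ : Equiv.Perm (Fin m)) (hτ : Antitone (x ∘ τ)) (hρ : Antitone (y ∘ ρ)) :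
    ∑ i, ∑ j, x i * B i j * y j ≤ ∑ n, x (τ n) * y (ρ n) := by
  classical
  exact E1 x y B hx hy hB hrow hcol τ ρ hτ hρ
    (fun a c ha hc P Q iP iQ k l hP hQ =>
      @mid' m a c ha hc P Q iP iQ B hB hrow hcol k l hP hQ)

lemma keyC {m : ℕ} (f : (Fin m → ℝ) → ℝ)
    (hf : ConvexOn ℝ Set.univ f)
    (hsym : ∀ (e : Equiv.Perm (Fin m)) (ε : Fin m → ℝ), (∀ i, ε i = 1 ∨ ε i = -1) →
      ∀ x : Fin m → ℝ, f (fun i => ε i * x (e i)) = f x)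
    (A U V : Matrix (Fin m) (Fin m) ℝ)
    (hU1 : Uᵀ * U = 1) (hU2 : U * Uᵀ = 1) (hV1 : Vᵀ * V = 1) (hV2 : V * Vᵀ = 1) :
    f (fun i => (Uᵀ * A * V) i i) ≤ f (svals A) := by
  classical
  obtain ⟨U₀, V₀, hU₀1, hU₀2, hV₀1, hV₀2, hdiag⟩ := exists_svd A
  set s : Fin m → ℝ := svals A with hsdef
  have hA : A = U₀ * (Matrix.diagonal s) * V₀ᵀ := by
    rw [← hdiag]
    calc A = (U₀ * U₀ᵀ) * A * (V₀ * V₀ᵀ) := by rw [hU₀2, hV₀2, Matrix.one_mul, Matrix.mul_one]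
      _ = U₀ * (U₀ᵀ * A * V₀) * V₀ᵀ := by simp only [Matrix.mul_assoc]
  set P : Matrix (Fin m) (Fin m) ℝ := U₀ᵀ * U with hPdef
  set Qm : Matrix (Fin m) (Fin m) ℝ := V₀ᵀ * V with hQdef
  have hPt : Pᵀ = Uᵀ * U₀ := by rw [hPdef, Matrix.transpose_mul, Matrix.transpose_transpose]
  have hQt : Qmᵀ = Vᵀ * V₀ := by rw [hQdef, Matrix.transpose_mul, Matrix.transpose_transpose]
  have hPtP : Pᵀ * P = 1 := by
    rw [hPt, hPdef, Matrix.mul_assoc, ← Matrix.mul_assoc U₀ U₀ᵀ U, hU₀2, Matrix.one_mul, hU1]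
  have hPPt : P * Pᵀ = 1 := mul_eq_one_comm.mp hPtP
  have hQtQ : Qmᵀ * Qm = 1 := by
    rw [hQt, hQdef, Matrix.mul_assoc, ← Matrix.mul_assoc V₀ V₀ᵀ V, hV₀2, Matrix.one_mul, hV1]
  have hQQt : Qm * Qmᵀ = 1 := mul_eq_one_comm.mp hQtQ
  have hPcol : ∀ i, ∑ j, P j i ^ 2 = 1 := by
    intro i
    have h := congrFun (congrFun hPtP i) i
    simpa [Matrix.mul_apply, Matrix.one_apply, pow_two] using h
  have hProw : ∀ j, ∑ i, P j i ^ 2 = 1 := by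
    intro j
    have h := congrFun (congrFun hPPt j) j
    simpa [Matrix.mul_apply, Matrix.one_apply, pow_two] using h
  have hQcol : ∀ i, ∑ j, Qm j i ^ 2 = 1 := by
    intro i
    have h := congrFun (congrFun hQtQ i) i
    simpa [Matrix.mul_apply, Matrix.one_apply, pow_two] using h
  have hQrow : ∀ j, ∑ i, Qm j i ^ 2 = 1 := by
    intro j
    have h := congrFun (congrFun hQQt j) j
    simpa [Matrix.mul_apply, Matrix.one_apply, pow_two] using h
  set C : Matrix (Fin m) (Fin m) ℝ := Matrix.of fun i j => P j i * Qm j i with hCdef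
  have habs : ∀ i j, |C i j| = |P j i| * |Qm j i| := fun i j => abs_mul _ _
  have hrow : ∀ i, ∑ j, |C i j| ≤ 1 := by
    intro i
    have hcs := Finset.sum_mul_sq_le_sq_mul_sq univ (fun j => |P j i|) (fun j => |Qm j i|)
    have h1 : ∑ j, |P j i| ^ 2 = 1 := by simpa [sq_abs] using hPcol i
    have h2 : ∑ j, |Qm j i| ^ 2 = 1 := by simpa [sq_abs] using hQcol i
    rw [h1, h2, one_mul] at hcs
    have hnn : 0 ≤ ∑ j, |P j i| * |Qm j i| :=
      Finset.sum_nonneg fun j _ => mul_nonneg (abs_nonneg _) (abs_nonneg _)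
    have : ∑ j, |C i j| = ∑ j, |P j i| * |Qm j i| := Finset.sum_congr rfl fun j _ => habs i j
    rw [this]
    nlinarith [hcs, hnn]
  have hcol : ∀ j, ∑ i, |C i j| ≤ 1 := by
    intro j
    have hcs := Finset.sum_mul_sq_le_sq_mul_sq univ (fun i => |P j i|) (fun i => |Qm j i|)
    have h1 : ∑ i, |P j i| ^ 2 = 1 := by simpa [sq_abs] using hProw j
    have h2 : ∑ i, |Qm j i| ^ 2 = 1 := by simpa [sq_abs] using hQrow j
    rw [h1, h2, one_mul] at hcs
    have hnn : 0 ≤ ∑ i, |P j i| * |Qm j i| :=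
      Finset.sum_nonneg fun i _ => mul_nonneg (abs_nonneg _) (abs_nonneg _)
    have : ∑ i, |C i j| = ∑ i, |P j i| * |Qm j i| := Finset.sum_congr rfl fun i _ => habs i j
    rw [this]
    nlinarith [hcs, hnn]
  have hd : (fun i => (Uᵀ * A * V) i i) = fun i => ∑ j, C i j * s j := by
    funext i
    have hmid : Uᵀ * A * V = Pᵀ * Matrix.diagonal s * Qm := by
      rw [hA, hPt, hQdef]
      simp only [Matrix.mul_assoc]
    rw [hmid, Matrix.mul_apply]
    refine Finset.sum_congr rfl fun j _ => ?_
    rw [Matrix.mul_diagonal]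
    simp only [hCdef, Matrix.of_apply, Matrix.transpose_apply]
    ring
  rw [hd]
  have hmem := memD s (fun i => Real.sqrt_nonneg _) C hrow hcol
    (fun x y B hx hy hB hr hc τ ρ hτ hρ => E1' x y B hx hy hB hr hc τ ρ hτ hρ)
  obtain ⟨y, hyG, hfy⟩ := hf.exists_ge_of_mem_convexHull (Set.subset_univ _) hmem
  obtain ⟨e, ε, hε, rfl⟩ := hyG
  exact hfy.trans (le_of_eq (hsym e ε hε s))

theorem stmt5 {m p q : ℕ} (f : (Fin m → ℝ) → ℝ)
    (hf : ConvexOn ℝ Set.univ f)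
    (hsym : ∀ (e : Equiv.Perm (Fin m)) (ε : Fin m → ℝ), (∀ i, ε i = 1 ∨ ε i = -1) →
      ∀ x : Fin m → ℝ, f (fun i => ε i * x (e i)) = f x)
    (M : Matrix (Fin p) (Fin q) ℝ → Matrix (Fin m) (Fin m) ℝ)
    (hM : ∀ (X Y : Matrix (Fin p) (Fin q) ℝ) (θ : ℝ),
      M (θ • X + (1 - θ) • Y) = θ • M X + (1 - θ) • M Y) :
    ConvexOn ℝ Set.univ (fun X => f (svDesc (M X))) := by
  have hDesc : ∀ A : Matrix (Fin m) (Fin m) ℝ, f (svDesc A) = f (svals A) := by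
    intro A
    have h := hsym ((Fin.revPerm).trans (Tuple.sort (svals A))) (fun _ => 1)
      (fun _ => Or.inl rfl) (svals A)
    calc f (svDesc A) = f (fun i => (1:ℝ) * svals A (((Fin.revPerm).trans
          (Tuple.sort (svals A))) i)) := by
          congr 1
          funext i
          simp [svDesc, Fin.revPerm]
      _ = f (svals A) := h
  refine ⟨convex_univ, ?_⟩
  intro X _ Y _ a b ha hb hab
  have hb' : b = 1 - a := by linarith
  subst hb'
  have hMC : M (a • X + (1 - a) • Y) = a • M X + (1 - a) • M Y := hM X Y a
  simp only
  rw [hDesc, hDesc, hDesc, hMC]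
  set A := M X
  set B := M Y
  obtain ⟨U, V, hU1, hU2, hV1, hV2, hdiag⟩ := exists_svd (a • A + (1 - a) • B)
  have hs : svals (a • A + (1 - a) • B)
      = fun i => (Uᵀ * (a • A + (1 - a) • B) * V) i i := by
    funext i
    rw [hdiag]
    simp
  have hsplit : (fun i => (Uᵀ * (a • A + (1 - a) • B) * V) i i)
      = a • (fun i => (Uᵀ * A * V) i i) + (1 - a) • (fun i => (Uᵀ * B * V) i i) := by
    funext i
    simp only [Pi.add_apply, Pi.smul_apply, smul_eq_mul]
    rw [Matrix.mul_add, Matrix.add_mul, Matrix.mul_smul, Matrix.smul_mul,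
      Matrix.mul_smul, Matrix.smul_mul]
    simp [Matrix.add_apply, Matrix.smul_apply]
  have hconv := hf.2 (Set.mem_univ (fun i => (Uᵀ * A * V) i i))
    (Set.mem_univ (fun i => (Uᵀ * B * V) i i)) ha hb (by linarith : a + (1 - a) = 1)
  rw [hs, hsplit]
  refine hconv.trans ?_
  have h1 := keyC f hf hsym A U V hU1 hU2 hV1 hV2
  have h2 := keyC f hf hsym B U V hU1 hU2 hV1 hV2
  have ha' : (0:ℝ) ≤ 1 - a := hb
  calc a • f (fun i => (Uᵀ * A * V) i i) + (1 - a) • f (fun i => (Uᵀ * B * V) i i)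
      ≤ a • f (svals A) + (1 - a) • f (svals B) := by
        apply add_le_add
        · exact smul_le_smul_of_nonneg_left h1 ha
        · exact smul_le_smul_of_nonneg_left h2 ha'
    _ = a * f (svals A) + (1 - a) * f (svals B) := by simp [smul_eq_mul]
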